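/- Consider a sequence of swaps in which agent I eventually obtains x, with z the object agent I trades in the last swap, and suppose object y, initially held by agent j, is swapped with z over the edge {i−1,i} before z reaches agent I. Then every object w that is swapped with y before the swap of y and z has type belonging to {2,3,…,j−i+1}. -/

import Mathlib

/-- The setting of the swap-dynamics model with `N` agents `0, 1, ..., N-1` and
`N` objects, object `j` being the object initially held by agent `j`.
Each agent has a preference list (a duplicate-free list of objects, most preferred
first), and the agents form a social network given by a simple graph. -/
structure SwapModel (N : ℕ) where
  /-- the preference list of each agent -/
  pref : Fin N → List (Fin N)
  nodup : ∀ i, (pref i).Nodup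
  /-- the underlying social network -/
  G : SimpleGraph (Fin N)

namespace SwapModel

variable {N : ℕ}

/-- Agent `i` prefers object `u` to object `v`: both appear on her preference list
and `u` appears (strictly) earlier. -/
def Prefers (M : SwapModel N) (i u v : Fin N) : Prop :=
  ∃ k l : ℕ, k < l ∧ (M.pref i)[k]? = some u ∧ (M.pref i)[l]? = some v

/-- An assignment: a bijection mapping every agent to an object on her list. -/
def IsAssignment (M : SwapModel N) (σ : Fin N → Fin N) : Prop :=
  Function.Bijective σ ∧ ∀ i, σ i ∈ M.pref i

/-- `(σ 0, σ 1, …, σ t)` is a sequence of swaps: each next assignment arises from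
the previous one by performing a swap between two adjacent agents, each of whom
prefers the object of the other agent. -/
def IsSwapSeq (M : SwapModel N) (t : ℕ) (σ : ℕ → Fin N → Fin N) : Prop :=
  M.IsAssignment (σ 0) ∧
    ∀ k, k < t → ∃ i j : Fin N, M.G.Adj i j ∧
      M.Prefers i (σ k j) (σ k i) ∧ M.Prefers j (σ k i) (σ k j) ∧
      σ (k + 1) = σ k ∘ Equiv.swap i j

end SwapModel

/-- A swap: agent `a1` gives object `o1` to agent `a2` and receives object `o2`;
this records the swap `τ = {{a1, o1}, {a2, o2}}`. -/
structure Swap (N : ℕ) where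
  a1 : Fin N
  o1 : Fin N
  a2 : Fin N
  o2 : Fin N

namespace SwapModel

variable {N : ℕ}

/-- The assignment `σ` admits the swap `τ`. -/
def Admitted (M : SwapModel N) (σ : Fin N → Fin N) (τ : Swap N) : Prop :=
  σ τ.a1 = τ.o1 ∧ σ τ.a2 = τ.o2 ∧ M.G.Adj τ.a1 τ.a2 ∧
    M.Prefers τ.a1 τ.o2 τ.o1 ∧ M.Prefers τ.a2 τ.o1 τ.o2

/-- The assignment obtained from `σ` by performing the swap `τ`. -/
def applySwap (σ : Fin N → Fin N) (τ : Swap N) : Fin N → Fin N :=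
  σ ∘ Equiv.swap τ.a1 τ.a2

/-- The assignment obtained from `σ` by performing a sequence of swaps. -/
def applySeq (σ : Fin N → Fin N) : List (Swap N) → (Fin N → Fin N)
  | [] => σ
  | τ :: φ => applySeq (applySwap σ τ) φ

/-- `φ` is a valid swap sequence for the start assignment `σ`. -/
def ValidSeq (M : SwapModel N) (σ : Fin N → Fin N) : List (Swap N) → Prop
  | [] => True
  | τ :: φ => M.Admitted σ τ ∧ M.ValidSeq (applySwap σ τ) φ

/-- Object `x` is reachable for agent `I` from the initial assignment `σ0`. -/
def Reachable (M : SwapModel N) (σ0 : Fin N → Fin N) (I x : Fin N) : Prop :=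
  ∃ φ : List (Swap N), M.ValidSeq σ0 φ ∧ applySeq σ0 φ I = x

end SwapModel

/-- The path graph on `N` agents: agents `i` and `i+1` are adjacent. -/
def pathGraph' (N : ℕ) : SimpleGraph (Fin N) where
  Adj i j := i.val + 1 = j.val ∨ j.val + 1 = i.val
  symm := ⟨by intro i j h; exact h.symm⟩
  loopless := ⟨by intro i h; rcases h with h | h <;> omega⟩

/-- Swap `τ` exchanges the objects `u` and `v`. -/
def Swap.exchanges {N : ℕ} (τ : Swap N) (u v : Fin N) : Prop :=
  (τ.o1 = u ∧ τ.o2 = v) ∨ (τ.o1 = v ∧ τ.o2 = u)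

/-- Swap `τ` takes place over the edge `{j, j+1}` of the path
(agents here being indexed by their `Fin` value). -/
def Swap.onEdge {N : ℕ} (τ : Swap N) (j : ℕ) : Prop :=
  (τ.a1.val = j ∧ τ.a2.val = j + 1) ∨ (τ.a2.val = j ∧ τ.a1.val = j + 1)

namespace SwapModel

variable {N : ℕ}

/-- Objects `x` and `y` can possibly be swapped over the edge with left endpoint `j`
in some sequence of swaps (starting from `σ0`) after which agent `I` holds `x`. -/
def CanSwapXOver (M : SwapModel N) (σ0 : Fin N → Fin N) (I x y : Fin N) (j : ℕ) : Prop :=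
  ∃ φ : List (Swap N), M.ValidSeq σ0 φ ∧ applySeq σ0 φ I = x ∧
    ∃ τ ∈ φ, τ.exchanges x y ∧ τ.onEdge j

/-- Object `y` has type `t` (with respect to target agent `I` and target object `x`):
for `t ≥ 1`, the unique edge over which `y` and `x` can possibly be swapped is the
edge `{I+t-1, I+t}` (the edge of index `t`); `t = 0` if no such edge exists. -/
def HasType (M : SwapModel N) (σ0 : Fin N → Fin N) (I x y : Fin N) (t : ℕ) : Prop :=
  (t = 0 ∧ ∀ j, ¬ M.CanSwapXOver σ0 I x y j) ∨
    (1 ≤ t ∧ M.CanSwapXOver σ0 I x y (I.val + t - 1) ∧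
      ∀ j, M.CanSwapXOver σ0 I x y j → j = I.val + t - 1)

end SwapModel

namespace SwapModel

variable {N : ℕ}

/-- A solution: a valid sequence of swaps after which agent `I` holds `x`, whose last
swap gives object `x` to agent `I` in exchange for object `z`. -/
def Solution (M : SwapModel N) (σ0 : Fin N → Fin N) (I x z : Fin N)
    (φ : List (Swap N)) : Prop :=
  M.ValidSeq σ0 φ ∧ applySeq σ0 φ I = x ∧
    ∃ (φ₀ : List (Swap N)) (τ : Swap N), φ = φ₀ ++ [τ] ∧
      ((τ.a1 = I ∧ τ.o1 = z ∧ τ.o2 = x) ∨ (τ.a2 = I ∧ τ.o2 = z ∧ τ.o1 = x))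

/-- Objects `z` and `y` can possibly be swapped over the edge with left endpoint `j`
in some solution. -/
def CanSwapZOver (M : SwapModel N) (σ0 : Fin N → Fin N) (I x z y : Fin N) (j : ℕ) : Prop :=
  ∃ φ : List (Swap N), M.Solution σ0 I x z φ ∧ ∃ τ ∈ φ, τ.exchanges z y ∧ τ.onEdge j

/-- Object `y` (of type `α`) has subtype `r`: the unique edge `e` over which `y` and `z`
can possibly be swapped exists, and `α ≤ h + 1` where `h` is the number of edges between
the agent initially holding `y` and the edge `e`. -/
def SubtypeR (M : SwapModel N) (σ0 : Fin N → Fin N) (I x z y : Fin N) (α : ℕ) : Prop :=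
  ∃ e : ℕ, M.CanSwapZOver σ0 I x z y e ∧ (∀ j, M.CanSwapZOver σ0 I x z y j → j = e) ∧
    ∀ a : Fin N, σ0 a = y →
      α ≤ (if a.val ≤ e then e - a.val else a.val - (e + 1)) + 1

/-- Object `y` (of type `α`) has subtype `ℓ`. -/
def SubtypeL (M : SwapModel N) (σ0 : Fin N → Fin N) (I x z y : Fin N) (α : ℕ) : Prop :=
  ¬ M.SubtypeR σ0 I x z y α

/-- Object `y` is swapped with object `x` during the sequence `φ`. -/
def SwappedWithX (φ : List (Swap N)) (x y : Fin N) : Prop :=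
  ∃ τ ∈ φ, τ.exchanges x y

end SwapModel


/-! ### Auxiliary development for Statement 12 -/

namespace S12

open SwapModel

variable {N : ℕ}

lemma applySeq_append (σ : Fin (N+1) → Fin (N+1)) (l1 l2 : List (Swap (N+1))) :
    applySeq σ (l1 ++ l2) = applySeq (applySeq σ l1) l2 := by
  induction l1 generalizing σ with
  | nil => rfl
  | cons τ l ih => simp only [List.cons_append, applySeq]; exact ih _

/-- The assignment after `t` steps. -/
def sq (σ0 : Fin (N+1) → Fin (N+1)) (φ : List (Swap (N+1))) (t : ℕ) :
    Fin (N+1) → Fin (N+1) :=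
  applySeq σ0 (φ.take t)

lemma sq_zero (σ0 : Fin (N+1) → Fin (N+1)) (φ : List (Swap (N+1))) : sq σ0 φ 0 = σ0 := rfl

lemma sq_succ {σ0 : Fin (N+1) → Fin (N+1)} {φ : List (Swap (N+1))} {t : ℕ}
    (ht : t < φ.length) :
    sq σ0 φ (t+1) = applySwap (sq σ0 φ t) (φ[t]'ht) := by
  unfold sq
  rw [List.take_succ, List.getElem?_eq_getElem ht]
  rw [applySeq_append]
  rfl

lemma sq_stable {σ0 : Fin (N+1) → Fin (N+1)} {φ : List (Swap (N+1))} {t : ℕ}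
    (ht : φ.length ≤ t) : sq σ0 φ t = sq σ0 φ φ.length := by
  unfold sq
  rw [List.take_of_length_le ht, List.take_length]

lemma admitted_at {M : SwapModel (N+1)} {σ0 : Fin (N+1) → Fin (N+1)}
    {φ : List (Swap (N+1))} (hv : M.ValidSeq σ0 φ) {t : ℕ} (ht : t < φ.length) :
    M.Admitted (sq σ0 φ t) (φ[t]'ht) := by
  induction φ generalizing σ0 t with
  | nil => simp at ht
  | cons τ l ih =>
    cases t with
    | zero => exact hv.1
    | succ t =>
      have ht' : t < l.length := by simpa using ht
      have := ih hv.2 ht'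
      simpa [sq, List.take_succ_cons, applySeq] using this

lemma applySeq_bij {σ0 : Fin (N+1) → Fin (N+1)} (hb : Function.Bijective σ0)
    (l : List (Swap (N+1))) : Function.Bijective (applySeq σ0 l) := by
  induction l generalizing σ0 with
  | nil => exact hb
  | cons τ l ih =>
    exact ih (Function.Bijective.comp hb (Equiv.swap τ.a1 τ.a2).bijective)

lemma sq_bij {σ0 : Fin (N+1) → Fin (N+1)} (hb : Function.Bijective σ0)
    (φ : List (Swap (N+1))) (t : ℕ) : Function.Bijective (sq σ0 φ t) :=
  applySeq_bij hb _

/-- Position of object `u` at time `t`. -/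
noncomputable def pos (σ0 : Fin (N+1) → Fin (N+1)) (φ : List (Swap (N+1)))
    (t : ℕ) (u : Fin (N+1)) : Fin (N+1) :=
  Function.invFun (sq σ0 φ t) u

/-- Numerical position of object `u` at time `t`. -/
noncomputable def P (σ0 : Fin (N+1) → Fin (N+1)) (φ : List (Swap (N+1)))
    (t : ℕ) (u : Fin (N+1)) : ℕ :=
  (pos σ0 φ t u).val

lemma sq_pos {σ0 : Fin (N+1) → Fin (N+1)} (hb : Function.Bijective σ0)
    {φ : List (Swap (N+1))} (t : ℕ) (u : Fin (N+1)) :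
    sq σ0 φ t (pos σ0 φ t u) = u :=
  Function.invFun_eq ((sq_bij hb φ t).surjective u)

lemma pos_eq {σ0 : Fin (N+1) → Fin (N+1)} (hb : Function.Bijective σ0)
    {φ : List (Swap (N+1))} {t : ℕ} {a u : Fin (N+1)} (h : sq σ0 φ t a = u) :
    pos σ0 φ t u = a :=
  (sq_bij hb φ t).injective (by rw [sq_pos hb, h])

lemma P_eq {σ0 : Fin (N+1) → Fin (N+1)} (hb : Function.Bijective σ0)
    {φ : List (Swap (N+1))} {t : ℕ} {a u : Fin (N+1)} (h : sq σ0 φ t a = u) :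
    P σ0 φ t u = a.val := by
  rw [P, pos_eq hb h]

lemma P_lt (σ0 : Fin (N+1) → Fin (N+1)) (φ : List (Swap (N+1))) (t : ℕ) (u : Fin (N+1)) :
    P σ0 φ t u < N + 1 :=
  (pos σ0 φ t u).isLt

lemma P_inj {σ0 : Fin (N+1) → Fin (N+1)} (hb : Function.Bijective σ0)
    {φ : List (Swap (N+1))} {t : ℕ} {u v : Fin (N+1)} (h : P σ0 φ t u = P σ0 φ t v) :
    u = v := by
  have h' : pos σ0 φ t u = pos σ0 φ t v := Fin.ext h
  rw [← sq_pos hb t u, h', sq_pos hb]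

lemma sq_of_P {σ0 : Fin (N+1) → Fin (N+1)} (hb : Function.Bijective σ0)
    {φ : List (Swap (N+1))} {t : ℕ} {u : Fin (N+1)} {p : ℕ} (h : P σ0 φ t u = p)
    (hp : p < N + 1) : sq σ0 φ t ⟨p, hp⟩ = u := by
  have h' : pos σ0 φ t u = ⟨p, hp⟩ := Fin.ext h
  rw [← h', sq_pos hb]

lemma P_stable {σ0 : Fin (N+1) → Fin (N+1)} {φ : List (Swap (N+1))} {t : ℕ}
    (ht : φ.length ≤ t) (u : Fin (N+1)) : P σ0 φ t u = P σ0 φ φ.length u := by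
  unfold P pos
  rw [sq_stable ht]

/-- Hypotheses bundled: path graph, bijective start, valid sequence. -/
structure Good (M : SwapModel (N+1)) (σ0 : Fin (N+1) → Fin (N+1))
    (φ : List (Swap (N+1))) : Prop where
  hG : M.G = pathGraph' (N+1)
  hb : Function.Bijective σ0
  hv : M.ValidSeq σ0 φ

lemma prefers_irrefl (M : SwapModel (N+1)) (a u : Fin (N+1)) : ¬ M.Prefers a u u := by
  rintro ⟨p, q, hpq, hp, hq⟩
  have hplt : p < (M.pref a).length := (List.getElem?_eq_some_iff.mp hp).1
  have := (List.getElem?_inj hplt (M.nodup a)).mp (hp.trans hq.symm)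
  omega

lemma prefers_trans {M : SwapModel (N+1)} {a u v w : Fin (N+1)}
    (h1 : M.Prefers a u v) (h2 : M.Prefers a v w) : M.Prefers a u w := by
  obtain ⟨p1, q1, h11, h12, h13⟩ := h1
  obtain ⟨p2, q2, h21, h22, h23⟩ := h2
  have hq1 : q1 < (M.pref a).length := (List.getElem?_eq_some_iff.mp h13).1
  have : q1 = p2 := (List.getElem?_inj hq1 (M.nodup a)).mp (h13.trans h22.symm)
  exact ⟨p1, q2, by omega, h12, h23⟩

lemma prefers_asymm {M : SwapModel (N+1)} {a u v : Fin (N+1)}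
    (h1 : M.Prefers a u v) (h2 : M.Prefers a v u) : False :=
  prefers_irrefl M a u (prefers_trans h1 h2)

lemma step_pref {M : SwapModel (N+1)} {σ0 : Fin (N+1) → Fin (N+1)}
    {φ : List (Swap (N+1))} (hv : M.ValidSeq σ0 φ) {t : ℕ} {a : Fin (N+1)}
    (hne : sq σ0 φ (t+1) a ≠ sq σ0 φ t a) :
    M.Prefers a (sq σ0 φ (t+1) a) (sq σ0 φ t a) := by
  by_cases ht : t < φ.length
  · obtain ⟨h1, h2, hadj, hp1, hp2⟩ := admitted_at hv ht
    rw [sq_succ ht] at hne ⊢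
    set τ := φ[t]'ht with hτ
    by_cases ha1 : a = τ.a1
    · subst ha1
      have : applySwap (sq σ0 φ t) τ τ.a1 = sq σ0 φ t τ.a2 := by
        simp [applySwap, Equiv.swap_apply_left]
      rw [this, h1, h2]
      exact hp1
    · by_cases ha2 : a = τ.a2
      · subst ha2
        have : applySwap (sq σ0 φ t) τ τ.a2 = sq σ0 φ t τ.a1 := by
          simp [applySwap, Equiv.swap_apply_right]
        rw [this, h1, h2]
        exact hp2
      · exfalso
        apply hne
        simp [applySwap, Equiv.swap_apply_of_ne_of_ne ha1 ha2]
  · exfalso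
    apply hne
    rw [sq_stable (t := t+1) (by omega), sq_stable (t := t) (by omega)]

lemma prefers_of_holds {M : SwapModel (N+1)} {σ0 : Fin (N+1) → Fin (N+1)}
    {φ : List (Swap (N+1))} (hb : Function.Bijective σ0) (hv : M.ValidSeq σ0 φ)
    {a u : Fin (N+1)} {s s' : ℕ} (hss : s ≤ s') (hu : sq σ0 φ s a = u) :
    ∀ v : Fin (N+1), sq σ0 φ s' a = v → u ≠ v → M.Prefers a v u := by
  induction s', hss using Nat.le_induction with
  | base =>
    intro v hv' hne
    exact absurd (hu.symm.trans hv') hne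
  | succ s' hss ih =>
    intro v hv' hne
    by_cases hcase : sq σ0 φ (s'+1) a = sq σ0 φ s' a
    · exact ih v (hcase ▸ hv') hne
    · have hpref := step_pref hv hcase
      rw [hv'] at hpref
      by_cases hw : sq σ0 φ s' a = u
      · rw [hw] at hpref
        exact hpref
      · exact prefers_trans hpref (ih _ rfl (fun h => hw h.symm))

lemma P_interval {M : SwapModel (N+1)} {σ0 : Fin (N+1) → Fin (N+1)}
    {φ : List (Swap (N+1))} (hb : Function.Bijective σ0) (hv : M.ValidSeq σ0 φ)
    {s m s' : ℕ} {u : Fin (N+1)} (hsm : s ≤ m) (hms : m ≤ s')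
    (hP : P σ0 φ s u = P σ0 φ s' u) : P σ0 φ m u = P σ0 φ s u := by
  by_contra hne
  set a := pos σ0 φ s u with ha
  have h1 : sq σ0 φ s a = u := sq_pos hb s u
  have h2 : sq σ0 φ s' a = u := by
    have : pos σ0 φ s' u = a := Fin.ext hP.symm
    rw [← this, sq_pos hb]
  have h3 : sq σ0 φ m a ≠ u := by
    intro h
    exact hne (by rw [P_eq hb h]; rfl)
  have hpr1 : M.Prefers a (sq σ0 φ m a) u :=
    prefers_of_holds hb hv hsm h1 _ rfl (fun h => h3 h.symm)
  have hpr2 : M.Prefers a u (sq σ0 φ m a) :=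
    prefers_of_holds hb hv hms rfl u h2 (fun h => h3 h)
  exact prefers_asymm hpr1 hpr2

/-- A direct swap at step `t` over edge `{c, c+1}`: `u` moves up, `v` moves down. -/
structure DSw (M : SwapModel (N+1)) (σ0 : Fin (N+1) → Fin (N+1))
    (φ : List (Swap (N+1))) (t c : ℕ) (u v : Fin (N+1)) : Prop where
  ht : t < φ.length
  hcN : c + 1 ≤ N
  puA : P σ0 φ t u = c
  pvA : P σ0 φ t v = c + 1
  puB : P σ0 φ (t+1) u = c + 1
  pvB : P σ0 φ (t+1) v = c
  mem : ∃ τ ∈ φ, τ.exchanges u v ∧ τ.onEdge c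
  pref : M.Prefers (pos σ0 φ t v) u v

lemma DSw.up {M : SwapModel (N+1)} {σ0 : Fin (N+1) → Fin (N+1)}
    {φ : List (Swap (N+1))} {t c : ℕ} {u v : Fin (N+1)}
    (d : DSw M σ0 φ t c u v) : P σ0 φ (t+1) u = P σ0 φ t u + 1 := by
  rw [d.puA, d.puB]

lemma DSw.down {M : SwapModel (N+1)} {σ0 : Fin (N+1) → Fin (N+1)}
    {φ : List (Swap (N+1))} {t c : ℕ} {u v : Fin (N+1)}
    (d : DSw M σ0 φ t c u v) : P σ0 φ (t+1) v + 1 = P σ0 φ t v := by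
  rw [d.pvA, d.pvB]

lemma DSw.ne {M : SwapModel (N+1)} {σ0 : Fin (N+1) → Fin (N+1)}
    {φ : List (Swap (N+1))} {t c : ℕ} {u v : Fin (N+1)}
    (d : DSw M σ0 φ t c u v) : u ≠ v := by
  intro h
  have := d.puA
  rw [h, d.pvA] at this
  omega

lemma step_data {M : SwapModel (N+1)} {σ0 : Fin (N+1) → Fin (N+1)}
    {φ : List (Swap (N+1))} (h : Good M σ0 φ) {t : ℕ} (ht : t < φ.length) :
    ∃ c uL uR, DSw M σ0 φ t c uL uR ∧
      (∀ u, u ≠ uL → u ≠ uR → P σ0 φ (t+1) u = P σ0 φ t u) ∧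
      (∀ u v, (φ[t]'ht).exchanges u v → ((u = uL ∧ v = uR) ∨ (v = uL ∧ u = uR))) ∧
      (∀ j, (φ[t]'ht).onEdge j → j = c) := by
  obtain ⟨h1, h2, hadj, hp1, hp2⟩ := admitted_at h.hv ht
  set τ := φ[t]'ht with hτ
  have hadj' : τ.a1.val + 1 = τ.a2.val ∨ τ.a2.val + 1 = τ.a1.val := by
    rw [h.hG] at hadj
    exact hadj
  have hτmem : τ ∈ φ := by rw [hτ]; exact List.getElem_mem ht
  have hupd : ∀ u, pos σ0 φ (t+1) u = Equiv.swap τ.a1 τ.a2 (pos σ0 φ t u) := by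
    intro u
    apply pos_eq h.hb
    rw [sq_succ ht, ← hτ]
    show sq σ0 φ t (Equiv.swap τ.a1 τ.a2 (Equiv.swap τ.a1 τ.a2 (pos σ0 φ t u))) = u
    rw [Equiv.swap_apply_self, sq_pos h.hb]
  have hpos1 : pos σ0 φ t τ.o1 = τ.a1 := pos_eq h.hb h1
  have hpos2 : pos σ0 φ t τ.o2 = τ.a2 := pos_eq h.hb h2
  have hP1 : P σ0 φ t τ.o1 = τ.a1.val := by rw [P, hpos1]
  have hP2 : P σ0 φ t τ.o2 = τ.a2.val := by rw [P, hpos2]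
  have hP1' : P σ0 φ (t+1) τ.o1 = τ.a2.val := by
    rw [P, hupd, hpos1, Equiv.swap_apply_left]
  have hP2' : P σ0 φ (t+1) τ.o2 = τ.a1.val := by
    rw [P, hupd, hpos2, Equiv.swap_apply_right]
  have hneutral : ∀ u, u ≠ τ.o1 → u ≠ τ.o2 → P σ0 φ (t+1) u = P σ0 φ t u := by
    intro u hu1 hu2
    have hne1 : pos σ0 φ t u ≠ τ.a1 := by
      intro hh
      apply hu1
      rw [← sq_pos h.hb t u, hh, h1]
    have hne2 : pos σ0 φ t u ≠ τ.a2 := by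
      intro hh
      apply hu2
      rw [← sq_pos h.hb t u, hh, h2]
    rw [P, hupd, Equiv.swap_apply_of_ne_of_ne hne1 hne2]
    rfl
  rcases hadj' with hor | hor
  · refine ⟨τ.a1.val, τ.o1, τ.o2, ⟨ht, by omega, hP1, by omega, by omega, hP2', ⟨τ, hτmem, Or.inl ⟨rfl, rfl⟩, Or.inl ⟨rfl, by omega⟩⟩, by rw [hpos2]; exact hp2⟩, hneutral, ?_, ?_⟩
    · intro u v hex
      rcases hex with ⟨hh1, hh2⟩ | ⟨hh1, hh2⟩
      · exact Or.inl ⟨hh1.symm, hh2.symm⟩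
      · exact Or.inr ⟨hh1.symm, hh2.symm⟩
    · intro j hj
      rcases hj with ⟨hh1, hh2⟩ | ⟨hh1, hh2⟩ <;> omega
  · have hcN : τ.a2.val + 1 ≤ N := by
      have := τ.a1.isLt
      omega
    refine ⟨τ.a2.val, τ.o2, τ.o1, ⟨ht, hcN, hP2, by omega, by omega, hP1', ⟨τ, hτmem, Or.inr ⟨rfl, rfl⟩, Or.inr ⟨rfl, by omega⟩⟩, by rw [hpos1]; exact hp1⟩, ?_, ?_, ?_⟩
    · intro u hu1 hu2
      exact hneutral u hu2 hu1
    · intro u v hex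
      rcases hex with ⟨hh1, hh2⟩ | ⟨hh1, hh2⟩
      · exact Or.inr ⟨hh2.symm, hh1.symm⟩
      · exact Or.inl ⟨hh2.symm, hh1.symm⟩
    · intro j hj
      rcases hj with ⟨hh1, hh2⟩ | ⟨hh1, hh2⟩ <;> omega

lemma step_cases {M : SwapModel (N+1)} {σ0 : Fin (N+1) → Fin (N+1)}
    {φ : List (Swap (N+1))} (h : Good M σ0 φ) (t : ℕ) (u : Fin (N+1)) :
    P σ0 φ (t+1) u = P σ0 φ t u ∨ P σ0 φ (t+1) u = P σ0 φ t u + 1 ∨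
      P σ0 φ t u = P σ0 φ (t+1) u + 1 := by
  by_cases ht : t < φ.length
  · obtain ⟨c, uL, uR, hds, hneu, _, _⟩ := step_data h ht
    by_cases h1 : u = uL
    · subst h1
      right; left
      exact hds.up
    · by_cases h2 : u = uR
      · subst h2
        right; right
        have := hds.down
        omega
      · exact Or.inl (hneu u h1 h2)
  · left
    unfold P pos
    rw [sq_stable (t := t+1) (by omega), sq_stable (t := t) (by omega)]

lemma ivt_up {M : SwapModel (N+1)} {σ0 : Fin (N+1) → Fin (N+1)}
    {φ : List (Swap (N+1))} (h : Good M σ0 φ) {a b q : ℕ} {u : Fin (N+1)}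
    (hab : a ≤ b) (h1 : P σ0 φ a u ≤ q) (h2 : q ≤ P σ0 φ b u) :
    ∃ m, a ≤ m ∧ m ≤ b ∧ P σ0 φ m u = q := by
  induction b, hab using Nat.le_induction with
  | base => exact ⟨a, le_refl a, le_refl a, by omega⟩
  | succ b hab ih =>
    rcases step_cases h b u with he | hup | hdn
    · obtain ⟨m, hm1, hm2, hm3⟩ := ih (by omega)
      exact ⟨m, hm1, by omega, hm3⟩
    · by_cases hq : q ≤ P σ0 φ b u
      · obtain ⟨m, hm1, hm2, hm3⟩ := ih hq
        exact ⟨m, hm1, by omega, hm3⟩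
      · exact ⟨b+1, by omega, le_refl _, by omega⟩
    · obtain ⟨m, hm1, hm2, hm3⟩ := ih (by omega)
      exact ⟨m, hm1, by omega, hm3⟩

lemma ivt_down {M : SwapModel (N+1)} {σ0 : Fin (N+1) → Fin (N+1)}
    {φ : List (Swap (N+1))} (h : Good M σ0 φ) {a b q : ℕ} {u : Fin (N+1)}
    (hab : a ≤ b) (h1 : P σ0 φ b u ≤ q) (h2 : q ≤ P σ0 φ a u) :
    ∃ m, a ≤ m ∧ m ≤ b ∧ P σ0 φ m u = q := by
  induction b, hab using Nat.le_induction with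
  | base => exact ⟨a, le_refl a, le_refl a, by omega⟩
  | succ b hab ih =>
    rcases step_cases h b u with he | hup | hdn
    · obtain ⟨m, hm1, hm2, hm3⟩ := ih (by omega)
      exact ⟨m, hm1, by omega, hm3⟩
    · obtain ⟨m, hm1, hm2, hm3⟩ := ih (by omega)
      exact ⟨m, hm1, by omega, hm3⟩
    · by_cases hq : P σ0 φ b u ≤ q
      · obtain ⟨m, hm1, hm2, hm3⟩ := ih hq
        exact ⟨m, hm1, by omega, hm3⟩
      · exact ⟨b+1, by omega, le_refl _, by omega⟩

lemma exists_up {M : SwapModel (N+1)} {σ0 : Fin (N+1) → Fin (N+1)}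
    {φ : List (Swap (N+1))} (h : Good M σ0 φ) {a b : ℕ} {u : Fin (N+1)}
    (hab : a ≤ b) (hlt : P σ0 φ a u < P σ0 φ b u) :
    ∃ r, a ≤ r ∧ r < b ∧ P σ0 φ (r+1) u = P σ0 φ r u + 1 := by
  induction b, hab using Nat.le_induction with
  | base => omega
  | succ b hab ih =>
    rcases step_cases h b u with he | hup | hdn
    · obtain ⟨r, h1, h2, h3⟩ := ih (by omega)
      exact ⟨r, h1, by omega, h3⟩
    · by_cases hq : P σ0 φ a u < P σ0 φ b u
      · obtain ⟨r, h1, h2, h3⟩ := ih hq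
        exact ⟨r, h1, by omega, h3⟩
      · exact ⟨b, by omega, by omega, hup⟩
    · obtain ⟨r, h1, h2, h3⟩ := ih (by omega)
      exact ⟨r, h1, by omega, h3⟩

lemma exists_down {M : SwapModel (N+1)} {σ0 : Fin (N+1) → Fin (N+1)}
    {φ : List (Swap (N+1))} (h : Good M σ0 φ) {a b : ℕ} {u : Fin (N+1)}
    (hab : a ≤ b) (hlt : P σ0 φ b u < P σ0 φ a u) :
    ∃ r, a ≤ r ∧ r < b ∧ P σ0 φ r u = P σ0 φ (r+1) u + 1 := by
  induction b, hab using Nat.le_induction with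
  | base => omega
  | succ b hab ih =>
    rcases step_cases h b u with he | hup | hdn
    · obtain ⟨r, h1, h2, h3⟩ := ih (by omega)
      exact ⟨r, h1, by omega, h3⟩
    · obtain ⟨r, h1, h2, h3⟩ := ih (by omega)
      exact ⟨r, h1, by omega, h3⟩
    · by_cases hq : P σ0 φ b u < P σ0 φ a u
      · obtain ⟨r, h1, h2, h3⟩ := ih hq
        exact ⟨r, h1, by omega, h3⟩
      · exact ⟨b, by omega, by omega, hdn⟩

lemma no_opposite {M : SwapModel (N+1)} {σ0 : Fin (N+1) → Fin (N+1)}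
    {φ : List (Swap (N+1))} (h : Good M σ0 φ) {s r : ℕ} {u : Fin (N+1)}
    (hdn : P σ0 φ s u = P σ0 φ (s+1) u + 1) (hup : P σ0 φ (r+1) u = P σ0 φ r u + 1) :
    False := by
  rcases lt_trichotomy s r with hsr | heq | hrs
  · -- s < r : down then up
    by_cases hq : P σ0 φ r u ≤ P σ0 φ (s+1) u
    · rcases eq_or_lt_of_le hq with heq2 | hlt2
      · -- P r u = P (s+1) u ; then P s u = P (r+1) u
        have hP : P σ0 φ s u = P σ0 φ (r+1) u := by omega
        have := P_interval h.hb h.hv (s := s) (m := s+1) (s' := r+1)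
          (by omega) (by omega) hP
        omega
      · -- P r u < P (s+1) u : find time at P (r+1) u in [s+1, r]
        obtain ⟨m, hm1, hm2, hm3⟩ := ivt_down h (a := s+1) (b := r)
          (q := P σ0 φ (r+1) u) (u := u) (by omega) (by omega) (by omega)
        have hP : P σ0 φ m u = P σ0 φ (r+1) u := hm3
        have := P_interval h.hb h.hv (s := m) (m := r) (s' := r+1)
          (by omega) (by omega) hP
        omega
    · -- P (s+1) u < P r u : find time at P s u in [s+1, r]
      obtain ⟨m, hm1, hm2, hm3⟩ := ivt_up h (a := s+1) (b := r)
        (q := P σ0 φ s u) (u := u) (by omega) (by omega) (by omega)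
      have hP : P σ0 φ s u = P σ0 φ m u := hm3.symm
      have := P_interval h.hb h.hv (s := s) (m := s+1) (s' := m)
        (by omega) (by omega) hP
      omega
  · subst heq; omega
  · -- r < s : up then down
    by_cases hq : P σ0 φ s u ≤ P σ0 φ r u
    · rcases eq_or_lt_of_le hq with heq2 | hlt2
      · -- P s u = P r u... then P r u = ? use (r, r+1, s)
        have hP : P σ0 φ r u = P σ0 φ s u := heq2.symm
        have := P_interval h.hb h.hv (s := r) (m := r+1) (s' := s)
          (by omega) (by omega) hP
        omega
      · -- P s u < P r u : find time at P r u in [r+1, s]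
        obtain ⟨m, hm1, hm2, hm3⟩ := ivt_down h (a := r+1) (b := s)
          (q := P σ0 φ r u) (u := u) (by omega) (by omega) (by omega)
        have hP : P σ0 φ r u = P σ0 φ m u := hm3.symm
        have := P_interval h.hb h.hv (s := r) (m := r+1) (s' := m)
          (by omega) (by omega) hP
        omega
    · -- P r u < P s u
      by_cases hq2 : P σ0 φ r u + 1 ≤ P σ0 φ (s+1) u
      · -- find time at P (s+1) u in [r+1, s]
        obtain ⟨m, hm1, hm2, hm3⟩ := ivt_up h (a := r+1) (b := s)
          (q := P σ0 φ (s+1) u) (u := u) (by omega) (by omega) (by omega)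
        have hP : P σ0 φ m u = P σ0 φ (s+1) u := hm3
        have := P_interval h.hb h.hv (s := m) (m := s) (s' := s+1)
          (by omega) (by omega) hP
        omega
      · -- P (s+1) u ≤ P r u and P r u < P s u = P (s+1) u + 1, so P (s+1) u = P r u
        have hP : P σ0 φ r u = P σ0 φ (s+1) u := by omega
        have := P_interval h.hb h.hv (s := r) (m := r+1) (s' := s+1)
          (by omega) (by omega) hP
        omega

lemma nondecr {M : SwapModel (N+1)} {σ0 : Fin (N+1) → Fin (N+1)}
    {φ : List (Swap (N+1))} (h : Good M σ0 φ) {r : ℕ} {u : Fin (N+1)}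
    (hup : P σ0 φ (r+1) u = P σ0 φ r u + 1) {a b : ℕ} (hab : a ≤ b) :
    P σ0 φ a u ≤ P σ0 φ b u := by
  by_contra hc
  obtain ⟨r', _, _, h3⟩ := exists_down h (u := u) hab (by omega)
  exact no_opposite h h3 hup

lemma nonincr {M : SwapModel (N+1)} {σ0 : Fin (N+1) → Fin (N+1)}
    {φ : List (Swap (N+1))} (h : Good M σ0 φ) {s : ℕ} {u : Fin (N+1)}
    (hdn : P σ0 φ s u = P σ0 φ (s+1) u + 1) {a b : ℕ} (hab : a ≤ b) :
    P σ0 φ b u ≤ P σ0 φ a u := by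
  by_contra hc
  obtain ⟨r', _, _, h3⟩ := exists_up h (u := u) hab (by omega)
  exact no_opposite h hdn h3

lemma order_flip {M : SwapModel (N+1)} {σ0 : Fin (N+1) → Fin (N+1)}
    {φ : List (Swap (N+1))} (h : Good M σ0 φ) {t : ℕ} {u v : Fin (N+1)}
    (huv : u ≠ v) (h1 : P σ0 φ t u < P σ0 φ t v)
    (h2 : P σ0 φ (t+1) v < P σ0 φ (t+1) u) : ∃ c, DSw M σ0 φ t c u v := by
  by_cases ht : t < φ.length
  · obtain ⟨c, uL, uR, hds, hneu, _, _⟩ := step_data h ht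
    have hA := hds.puA
    have hB := hds.pvA
    have hA' := hds.puB
    have hB' := hds.pvB
    by_cases huL : u = uL
    · by_cases hvR : v = uR
      · rw [huL, hvR]
        exact ⟨c, hds⟩
      · exfalso
        have hvL : v ≠ uL := fun hh => huv (huL.trans hh.symm)
        have e1 : P σ0 φ (t+1) v = P σ0 φ t v := hneu v hvL hvR
        rw [huL] at h1 h2
        omega
    · by_cases huR : u = uR
      · exfalso
        have hvL : v ≠ uL := by
          intro hh
          rw [huR] at h1
          rw [hh] at h1
          omega
        have hvR : v ≠ uR := fun hh => huv (huR.trans hh.symm)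
        have e1 : P σ0 φ (t+1) v = P σ0 φ t v := hneu v hvL hvR
        rw [huR] at h1 h2
        omega
      · have e0 : P σ0 φ (t+1) u = P σ0 φ t u := hneu u huL huR
        by_cases hvL : v = uL
        · exfalso
          rw [hvL] at h1 h2
          omega
        · by_cases hvR : v = uR
          · exfalso
            rw [hvR] at h1 h2
            omega
          · exfalso
            have e1 : P σ0 φ (t+1) v = P σ0 φ t v := hneu v hvL hvR
            omega
  · exfalso
    have e1 : P σ0 φ (t+1) u = P σ0 φ t u := by
      unfold P pos
      rw [sq_stable (t := t+1) (by omega), sq_stable (t := t) (by omega)]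
    have e2 : P σ0 φ (t+1) v = P σ0 φ t v := by
      unfold P pos
      rw [sq_stable (t := t+1) (by omega), sq_stable (t := t) (by omega)]
    omega

lemma cross {M : SwapModel (N+1)} {σ0 : Fin (N+1) → Fin (N+1)}
    {φ : List (Swap (N+1))} (h : Good M σ0 φ) {a b : ℕ} {u v : Fin (N+1)}
    (huv : u ≠ v) (hab : a ≤ b) (h1 : P σ0 φ a u < P σ0 φ a v)
    (h2 : P σ0 φ b v < P σ0 φ b u) :
    ∃ r c, a ≤ r ∧ r < b ∧ DSw M σ0 φ r c u v := by
  induction b, hab using Nat.le_induction with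
  | base => omega
  | succ b hab ih =>
    by_cases hc : P σ0 φ b v < P σ0 φ b u
    · obtain ⟨r, c, hh1, hh2, hh3⟩ := ih hc
      exact ⟨r, c, hh1, by omega, hh3⟩
    · have hne : P σ0 φ b u ≠ P σ0 φ b v := fun hh => huv (P_inj h.hb hh)
      have hlt : P σ0 φ b u < P σ0 φ b v := by omega
      obtain ⟨c, hds⟩ := order_flip h huv hlt h2
      exact ⟨b, c, hab, by omega, hds⟩

lemma dsw_unique {M : SwapModel (N+1)} {σ0 : Fin (N+1) → Fin (N+1)}
    {φ : List (Swap (N+1))} (h : Good M σ0 φ) {t t' c c' : ℕ} {u v : Fin (N+1)}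
    (d1 : DSw M σ0 φ t c u v) (d2 : DSw M σ0 φ t' c' u v) : t = t' ∧ c = c' := by
  rcases lt_trichotomy t t' with hlt | heq | hgt
  · exfalso
    have hU : P σ0 φ (t+1) u ≤ P σ0 φ t' u := nondecr h d1.up (by omega)
    have hD : P σ0 φ t' v ≤ P σ0 φ (t+1) v := by
      have hd : P σ0 φ t v = P σ0 φ (t+1) v + 1 := by
        have := d1.down; omega
      exact nonincr h hd (by omega)
    have := d1.puB
    have := d1.pvB
    have := d2.puA
    have := d2.pvA
    omega
  · subst heq
    have h1 := d1.puA
    have h2 := d2.puA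
    omega
  · exfalso
    have hU : P σ0 φ (t'+1) u ≤ P σ0 φ t u := nondecr h d2.up (by omega)
    have hD : P σ0 φ t v ≤ P σ0 φ (t'+1) v := by
      have hd : P σ0 φ t' v = P σ0 φ (t'+1) v + 1 := by
        have := d2.down; omega
      exact nonincr h hd (by omega)
    have := d2.puB
    have := d2.pvB
    have := d1.puA
    have := d1.pvA
    omega

lemma P_zero_eq {σ0 : Fin (N+1) → Fin (N+1)} (φ1 φ2 : List (Swap (N+1)))
    (u : Fin (N+1)) : P σ0 φ1 0 u = P σ0 φ2 0 u := rfl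

/-- Facts about the trajectory of `x` in a sequence after which `I` holds `x`. -/
lemma x_facts {M : SwapModel (N+1)} {σ0 : Fin (N+1) → Fin (N+1)}
    {φ : List (Swap (N+1))} (h : Good M σ0 φ) {x I : Fin (N+1)}
    (hx : σ0 (Fin.last N) = x) (hIx : applySeq σ0 φ I = x) (hIN : I.val < N) :
    P σ0 φ 0 x = N ∧ P σ0 φ φ.length x = I.val ∧
      (∀ a b, a ≤ b → P σ0 φ b x ≤ P σ0 φ a x) ∧ (∀ t, I.val ≤ P σ0 φ t x) := by
  have hP0 : P σ0 φ 0 x = N := by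
    have : sq σ0 φ 0 (Fin.last N) = x := hx
    rw [P_eq h.hb this]
    rfl
  have hPT : P σ0 φ φ.length x = I.val := by
    have : sq σ0 φ φ.length I = x := by
      unfold sq
      rw [List.take_length]
      exact hIx
    exact P_eq h.hb this
  have hdn : ∃ r, 0 ≤ r ∧ r < φ.length ∧ P σ0 φ r x = P σ0 φ (r+1) x + 1 :=
    exists_down h (u := x) (by omega) (by omega)
  obtain ⟨r, _, _, hr⟩ := hdn
  have hmono : ∀ a b, a ≤ b → P σ0 φ b x ≤ P σ0 φ a x := fun a b hab => nonincr h hr hab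
  refine ⟨hP0, hPT, hmono, fun t => ?_⟩
  rcases le_or_gt t φ.length with hle | hlt
  · have := hmono t φ.length hle
    omega
  · rw [P_stable (by omega)]
    omega

/-- In a valid sequence after which `I` holds `x`, a swap exchanging `x` and `w`
over edge `j` yields a direct-swap with `w` moving up. -/
lemma seq_cross {M : SwapModel (N+1)} {σ0 : Fin (N+1) → Fin (N+1)}
    {ψ : List (Swap (N+1))} (h : Good M σ0 ψ) {x I w : Fin (N+1)} {j : ℕ}
    (hx : σ0 (Fin.last N) = x) (hIx : applySeq σ0 ψ I = x) (hIN : I.val < N)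
    {τ : Swap (N+1)} (hmem : τ ∈ ψ) (hex : τ.exchanges x w) (hedge : τ.onEdge j) :
    ∃ r, DSw M σ0 ψ r j w x := by
  obtain ⟨hP0, hPT, hmono, hge⟩ := x_facts h hx hIx hIN
  obtain ⟨⟨r, hr⟩, hget⟩ := List.mem_iff_get.mp hmem
  obtain ⟨c, uL, uR, hds, hneu, hexf, hedgef⟩ := step_data h hr
  have hget' : ψ[r]'hr = τ := hget
  have hj : j = c := hedgef j (hget' ▸ hedge)
  have hcase := hexf x w (hget' ▸ hex)
  rcases hcase with ⟨hxL, hwR⟩ | ⟨hwL, hxR⟩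
  · exfalso
    have hup : P σ0 ψ (r+1) x = P σ0 ψ r x + 1 := by
      rw [hxL]
      exact hds.up
    have := hmono r (r+1) (by omega)
    omega
  · rw [hj, hwL, hxR]
    exact ⟨r, hds⟩

/-- Two sequences that both deliver `x` to `I` cannot swap `x` with `w`
over different edges. -/
lemma two_seq {M : SwapModel (N+1)} {σ0 : Fin (N+1) → Fin (N+1)}
    {φ1 φ2 : List (Swap (N+1))} (h1 : Good M σ0 φ1) (h2 : Good M σ0 φ2)
    {x I w : Fin (N+1)} (hx : σ0 (Fin.last N) = x)
    (hI1 : applySeq σ0 φ1 I = x) (hI2 : applySeq σ0 φ2 I = x) (hIN : I.val < N)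
    {r1 r2 j1 j2 : ℕ} (d1 : DSw M σ0 φ1 r1 j1 w x) (d2 : DSw M σ0 φ2 r2 j2 w x)
    (hj : j1 < j2) : False := by
  have hwx : w ≠ x := d1.ne
  obtain ⟨hP01, hPT1, hmono1, hge1⟩ := x_facts h1 hx hI1 hIN
  obtain ⟨hP02, hPT2, hmono2, hge2⟩ := x_facts h2 hx hI2 hIN
  -- the agent at position j1 + 1
  have hj1N : j1 + 1 < N + 1 := by
    have := d1.hcN
    omega
  set α : Fin (N+1) := ⟨j1 + 1, hj1N⟩ with hα
  have hpα : pos σ0 φ1 r1 x = α := by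
    apply Fin.ext
    show P σ0 φ1 r1 x = j1 + 1
    exact d1.pvA
  have hA : M.Prefers α w x := by
    rw [← hpα]
    exact d1.pref
  -- seq-2 analysis
  have hwmono2 : ∀ a b, a ≤ b → P σ0 φ2 a w ≤ P σ0 φ2 b w :=
    fun a b hab => nondecr h2 d2.up hab
  have hwmono1 : ∀ a b, a ≤ b → P σ0 φ1 a w ≤ P σ0 φ1 b w :=
    fun a b hab => nondecr h1 d1.up hab
  have hP0w : P σ0 φ2 0 w ≤ j1 := by
    have e0 : P σ0 φ2 0 w = P σ0 φ1 0 w := P_zero_eq φ2 φ1 w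
    have := hwmono1 0 r1 (by omega)
    have := d1.puA
    omega
  have hr2len : r2 < φ2.length := d2.ht
  have hIj1 : I.val ≤ j1 := by
    have := hge1 (r1+1)
    have := d1.pvB
    omega
  -- w reaches j1+1 in seq 2
  obtain ⟨t1, ht10, ht1r2, ht1P⟩ := ivt_up h2 (a := 0) (b := r2) (q := j1 + 1) (u := w)
    (by omega) (by omega) (by rw [d2.puA]; omega)
  -- x reaches j1+1 in seq 2, after r2
  obtain ⟨t2, ht2r2, ht2T, ht2P⟩ := ivt_down h2 (a := r2 + 1) (b := φ2.length)
    (q := j1 + 1) (u := x) (by omega) (by omega) (by rw [d2.pvB]; omega)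
  -- t1 < t2
  have ht1t2 : t1 < t2 := by
    have hw2 : P σ0 φ2 (r2+1) w ≤ P σ0 φ2 t2 w := hwmono2 (r2+1) t2 (by omega)
    have := d2.puB
    by_contra hc
    have := hwmono2 t2 t1 (by omega)
    omega
  have hold1 : sq σ0 φ2 t1 α = w := sq_of_P h2.hb ht1P hj1N
  have hold2 : sq σ0 φ2 t2 α = x := sq_of_P h2.hb ht2P hj1N
  have hB : M.Prefers α x w :=
    prefers_of_holds h2.hb h2.hv (by omega) hold1 x hold2 hwx
  exact prefers_asymm hA hB

end S12

/-- Lemma 3 (i).  The underlying graph is the path on agents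
`0, 1, …, N`, the target object `x` is initially held by the last agent, and the
target agent `I` is not the last agent.  Consider a solution `φ` (a sequence of swaps
in which agent `I` eventually obtains `x`, with `z` the object agent `I` trades in
the last swap).  Suppose object `y`, initially held by agent `jA`, is swapped with `z`
over the edge with left endpoint `e` at step `k` of `φ`, before `z` reaches agent `I`.
Then every object `w` that is swapped with `y` before the swap of `y` and `z` has a
type belonging to `{2, 3, …, jA - e}` (which, in the paper's 1-based labelling with
edge `{i-1, i}` and holder `j`, is the set `{2, 3, …, j - i + 1}`). -/
theorem statement12 (N : ℕ) (M : SwapModel (N + 1)) (hG : M.G = pathGraph' (N + 1))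
    (σ0 : Fin (N + 1) → Fin (N + 1)) (hσ0 : M.IsAssignment σ0)
    (x : Fin (N + 1)) (hx : σ0 (Fin.last N) = x)
    (I : Fin (N + 1)) (hI : I < Fin.last N)
    (z : Fin (N + 1)) (φ : List (Swap (N + 1))) (hsol : M.Solution σ0 I x z φ)
    (y : Fin (N + 1)) (jA : Fin (N + 1)) (hjA : σ0 jA = y)
    (e k : ℕ) (τk : Swap (N + 1)) (hk : φ[k]? = some τk)
    (hky : τk.exchanges y z) (hke : τk.onEdge e)
    (hbefore : ∀ k', k' ≤ k → SwapModel.applySeq σ0 (φ.take k') I ≠ z) :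
    ∀ w : Fin (N + 1),
      (∃ k'', k'' < k ∧ ∃ τ : Swap (N + 1), φ[k'']? = some τ ∧ τ.exchanges w y) →
      ∃ t, 2 ≤ t ∧ t ≤ jA.val - e ∧ M.HasType σ0 I x w t := by
  intro w hw
  obtain ⟨k'', hk''k, τ'', hτ''opt, hexwy⟩ := hw
  obtain ⟨hv, hIx, φ₀, τl, hφeq, hτl⟩ := hsol
  have hGd : S12.Good M σ0 φ := ⟨hG, hσ0.1, hv⟩
  have hIN : I.val < N := by simpa [Fin.lt_def] using hI
  obtain ⟨hkT, hτk⟩ := List.getElem?_eq_some_iff.mp hk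
  obtain ⟨hk''T, hτ''⟩ := List.getElem?_eq_some_iff.mp hτ''opt
  obtain ⟨hP0x, hPTx, hxmono, hxge⟩ := S12.x_facts hGd hx hIx hIN
  have hTpos : 0 < φ.length := by rw [hφeq]; simp
  have hlastlt : φ.length - 1 < φ.length := by omega
  have hlast : φ[φ.length - 1]'hlastlt = τl := by
    have e : φ[φ.length-1]'hlastlt
        = (φ₀ ++ [τl])[φ.length-1]'(hφeq ▸ hlastlt) :=
      List.getElem_of_eq hφeq hlastlt
    rw [e]
    exact List.getElem_concat_length (l := φ₀) (a := τl) (by rw [hφeq]; simp) _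
  -- ===== the final swap : z and x over edge I =====
  have hDzx : S12.DSw M σ0 φ (φ.length - 1) I.val z x := by
    obtain ⟨h1, h2, hadj, hp1, hp2⟩ := S12.admitted_at hv hlastlt
    rw [hlast] at h1 h2 hadj hp1 hp2
    have hadj' : τl.a1.val + 1 = τl.a2.val ∨ τl.a2.val + 1 = τl.a1.val := by
      rw [hG] at hadj; exact hadj
    have hupd : ∀ u, S12.pos σ0 φ (φ.length - 1 + 1) u
        = Equiv.swap τl.a1 τl.a2 (S12.pos σ0 φ (φ.length-1) u) := by
      intro u
      apply S12.pos_eq hσ0.1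
      rw [S12.sq_succ hlastlt, hlast]
      show S12.sq σ0 φ (φ.length-1)
        (Equiv.swap τl.a1 τl.a2 (Equiv.swap τl.a1 τl.a2 (S12.pos σ0 φ (φ.length-1) u))) = u
      rw [Equiv.swap_apply_self, S12.sq_pos hσ0.1]
    have hx2 : S12.P σ0 φ (φ.length-1+1) x = I.val := by
      have hrw : φ.length - 1 + 1 = φ.length := by omega
      rw [hrw]; exact hPTx
    rcases hτl with ⟨ha1, ho1, ho2⟩ | ⟨ha2, ho2, ho1⟩
    · rw [ha1, ho1] at h1
      rw [ho2] at h2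
      have hx1 : S12.P σ0 φ (φ.length-1) x = τl.a2.val := S12.P_eq hσ0.1 h2
      have ha2v : τl.a2.val = I.val + 1 := by
        rcases hadj' with hh | hh
        · rw [ha1] at hh; omega
        · exfalso
          rw [ha1] at hh
          have := hxge (φ.length - 1)
          omega
      have hposz : S12.pos σ0 φ (φ.length-1) z = I := S12.pos_eq hσ0.1 h1
      have hz2 : S12.P σ0 φ (φ.length-1+1) z = I.val + 1 := by
        have hpz : S12.pos σ0 φ (φ.length-1+1) z = τl.a2 := by
          rw [hupd z, hposz, ← ha1, Equiv.swap_apply_left]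
        unfold S12.P
        rw [hpz, ha2v]
      refine ⟨hlastlt, by have := τl.a2.isLt; omega, S12.P_eq hσ0.1 h1,
        by rw [hx1]; exact ha2v, hz2, hx2,
        ⟨τl, by rw [hφeq]; simp, Or.inl ⟨ho1, ho2⟩, Or.inl ⟨by rw [ha1], ha2v⟩⟩, ?_⟩
      have hpx : S12.pos σ0 φ (φ.length-1) x = τl.a2 := S12.pos_eq hσ0.1 h2
      rw [hpx, ← ho1, ← ho2]
      exact hp2
    · rw [ha2, ho2] at h2
      rw [ho1] at h1
      have hx1 : S12.P σ0 φ (φ.length-1) x = τl.a1.val := S12.P_eq hσ0.1 h1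
      have ha1v : τl.a1.val = I.val + 1 := by
        rcases hadj' with hh | hh
        · exfalso
          rw [ha2] at hh
          have := hxge (φ.length - 1)
          omega
        · rw [ha2] at hh; omega
      have hposz : S12.pos σ0 φ (φ.length-1) z = I := S12.pos_eq hσ0.1 h2
      have hz2 : S12.P σ0 φ (φ.length-1+1) z = I.val + 1 := by
        have hpz : S12.pos σ0 φ (φ.length-1+1) z = τl.a1 := by
          rw [hupd z, hposz, ← ha2, Equiv.swap_apply_right]
        unfold S12.P
        rw [hpz, ha1v]
      refine ⟨hlastlt, by have := τl.a1.isLt; omega, S12.P_eq hσ0.1 h2,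
        by rw [hx1]; exact ha1v, hz2, hx2,
        ⟨τl, by rw [hφeq]; simp, Or.inr ⟨ho1, ho2⟩, Or.inr ⟨by rw [ha2], ha1v⟩⟩, ?_⟩
      have hpx : S12.pos σ0 φ (φ.length-1) x = τl.a1 := S12.pos_eq hσ0.1 h1
      rw [hpx, ← ho1, ← ho2]
      exact hp1
  have hzmono : ∀ a b, a ≤ b → S12.P σ0 φ a z ≤ S12.P σ0 φ b z :=
    fun a b hab => S12.nondecr hGd hDzx.up hab
  have hPTzval : S12.P σ0 φ φ.length z = I.val + 1 := by
    have h1 := hDzx.puB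
    have hrw : φ.length - 1 + 1 = φ.length := by omega
    rw [hrw] at h1
    exact h1
  -- ===== the swap at step k : z and y over edge e =====
  have hDzy : S12.DSw M σ0 φ k e z y := by
    obtain ⟨c, uL, uR, hds, hneu, hexf, hedgef⟩ := S12.step_data hGd hkT
    have he_c : e = c := hedgef e (hτk ▸ hke)
    rcases hexf y z (hτk ▸ hky) with ⟨hyL, hzR⟩ | ⟨hzL, hyR⟩
    · exfalso
      have hdz := hds.down
      rw [← hzR] at hdz
      refine S12.no_opposite hGd (s := k) (u := z) ?_ hDzx.up
      omega
    · rw [he_c, hzL, hyR]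
      exact hds
  have hymono : ∀ a b, a ≤ b → S12.P σ0 φ b y ≤ S12.P σ0 φ a y := by
    intro a b hab
    refine S12.nonincr hGd (s := k) ?_ hab
    have := hDzy.down
    omega
  have heI : e < I.val := by
    have hle : e ≤ I.val := by
      have h1 := hDzy.puA
      have h2 := hzmono k (φ.length - 1) (by omega)
      have h3 := hDzx.puA
      omega
    have hne : e ≠ I.val := by
      intro hh
      apply hbefore k le_rfl
      have hsz : S12.sq σ0 φ k ⟨e, by omega⟩ = z := S12.sq_of_P hσ0.1 hDzy.puA (by omega)
      have hfe : (⟨e, by omega⟩ : Fin (N+1)) = I := Fin.ext hh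
      rw [hfe] at hsz
      exact hsz
    omega
  have hP0y : S12.P σ0 φ 0 y = jA.val := S12.P_eq hσ0.1 (show S12.sq σ0 φ 0 jA = y from hjA)
  have hejA : e + 1 ≤ jA.val := by
    have := hymono 0 k (by omega)
    have := hDzy.pvA
    omega
  -- ===== the swap at step k'' : w and y over edge c2 =====
  obtain ⟨c2, hDwy⟩ : ∃ c2, S12.DSw M σ0 φ k'' c2 w y := by
    obtain ⟨c2, uL2, uR2, hds2, hneu2, hexf2, hedgef2⟩ := S12.step_data hGd hk''T
    rcases hexf2 w y (hτ'' ▸ hexwy) with ⟨hwL, hyR2⟩ | ⟨hyL2, hwR2⟩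
    · refine ⟨c2, ?_⟩
      rw [hwL, hyR2]
      exact hds2
    · exfalso
      have hupy := hds2.up
      rw [← hyL2] at hupy
      refine S12.no_opposite hGd (s := k) (r := k'') ?_ hupy
      have := hDzy.down
      omega
  have hwmono : ∀ a b, a ≤ b → S12.P σ0 φ a w ≤ S12.P σ0 φ b w :=
    fun a b hab => S12.nondecr hGd hDwy.up hab
  have hmE : e + 1 ≤ c2 := by
    have := hymono (k''+1) k (by omega)
    have := hDwy.pvB
    have := hDzy.pvA
    omega
  have hmjA : c2 + 1 ≤ jA.val := by
    have := hymono 0 k'' (by omega)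
    have := hDwy.pvA
    omega
  have hwz : w ≠ z := by
    intro hh
    have h1 : S12.DSw M σ0 φ k'' c2 z y := by rw [← hh]; exact hDwy
    have := (S12.dsw_unique hGd h1 hDzy).1
    omega
  have hwx : w ≠ x := by
    intro hh
    have hup := hDwy.up
    rw [hh] at hup
    have := hxmono k'' (k''+1) (by omega)
    omega
  -- z is always strictly left of w
  have hPzw : ∀ t, S12.P σ0 φ t z < S12.P σ0 φ t w := by
    have hbase : S12.P σ0 φ k'' z < S12.P σ0 φ k'' w := by
      have h1 := hzmono k'' k (by omega)
      have h2 := hDzy.puA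
      have h3 := hDwy.puA
      omega
    intro t
    rcases lt_trichotomy (S12.P σ0 φ t z) (S12.P σ0 φ t w) with hlt | heq2 | hgt
    · exact hlt
    · exact absurd (S12.P_inj hσ0.1 heq2).symm hwz
    · exfalso
      rcases le_or_gt t k'' with htk | htk
      · obtain ⟨rr, cc, _, _, dd⟩ := S12.cross hGd hwz htk hgt hbase
        refine S12.no_opposite hGd (s := rr) ?_ hDzx.up
        have := dd.down
        omega
      · obtain ⟨rr, cc, _, _, dd⟩ := S12.cross hGd (Ne.symm hwz) (le_of_lt htk) hbase hgt
        refine S12.no_opposite hGd (s := rr) ?_ hDwy.up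
        have := dd.down
        omega
  have hPTw : I.val + 2 ≤ S12.P σ0 φ φ.length w := by
    have := hPzw φ.length
    omega
  -- ===== w crosses x at edge j0 ≥ I+1 =====
  have hP0wx : S12.P σ0 φ 0 w < S12.P σ0 φ 0 x := by
    have h1 := S12.P_lt σ0 φ 0 w
    have h2 : S12.P σ0 φ 0 w ≠ N := by
      intro hh
      exact hwx (S12.P_inj hσ0.1 (by rw [hh, hP0x]))
    omega
  obtain ⟨r0, j0, _, hr0T, hDwx⟩ :=
    S12.cross hGd hwx (Nat.zero_le φ.length) hP0wx (by rw [hPTx]; omega)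
  have hj0I : I.val + 1 ≤ j0 := by
    have hge : I.val ≤ j0 := by
      have := hxge (r0+1)
      have := hDwx.pvB
      omega
    have hne : j0 ≠ I.val := by
      intro hh
      rcases lt_trichotomy r0 (φ.length - 1) with hc1 | hc2 | hc3
      · have := hxmono (r0+1) (φ.length-1) (by omega)
        have := hDzx.pvA
        have := hDwx.pvB
        omega
      · apply hwz
        have e1 : S12.P σ0 φ r0 w = I.val := by rw [hDwx.puA]; exact hh
        have e2 : S12.P σ0 φ r0 z = I.val := by rw [hc2]; exact hDzx.puA
        exact S12.P_inj hσ0.1 (e1.trans e2.symm)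
      · have := hDwx.ht; omega
    omega
  -- ===== x crosses every edge between I+1 and j0 =====
  have hxcross : ∀ j, I.val ≤ j → j ≤ j0 → ∃ r v, S12.DSw M σ0 φ r j v x := by
    intro j hj1 hj2
    rcases eq_or_lt_of_le hj2 with heqj | hltj
    · exact ⟨r0, w, by rw [heqj]; exact hDwx⟩
    · obtain ⟨m0, hm01, hm02, hm03⟩ := S12.ivt_down hGd (a := r0+1) (b := φ.length)
        (q := j+1) (u := x) (by have := hDwx.ht; omega)
        (by rw [hPTx]; omega) (by have := hDwx.pvB; omega)
      set r := Nat.findGreatest (fun t => S12.P σ0 φ t x = j+1) φ.length with hrdef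
      have hQr : S12.P σ0 φ r x = j + 1 := by
        rw [hrdef]
        exact Nat.findGreatest_spec (P := fun t => S12.P σ0 φ t x = j+1) hm02 hm03
      have hrle : r ≤ φ.length := by
        rw [hrdef]
        exact Nat.findGreatest_le _
      have hrlt : r < φ.length := by
        rcases eq_or_lt_of_le hrle with hh | hh
        · exfalso
          rw [hh] at hQr
          omega
        · exact hh
      have hnot : ¬ (S12.P σ0 φ (r+1) x = j + 1) := by
        intro hcon
        exact Nat.findGreatest_is_greatest (P := fun t => S12.P σ0 φ t x = j+1)
          (by rw [← hrdef]; omega) (by omega) hcon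
      have hstep : S12.P σ0 φ (r+1) x = j := by
        rcases S12.step_cases hGd r x with h1 | h2 | h3
        · omega
        · exfalso
          have := hxmono r (r+1) (by omega)
          omega
        · omega
      obtain ⟨c, uL, uR, hds, hneu, _, _⟩ := S12.step_data hGd hrlt
      by_cases hxL : x = uL
      · exfalso
        have hup := hds.up
        rw [← hxL] at hup
        omega
      · by_cases hxR : x = uR
        · have hc : c = j := by
            have := hds.pvA
            rw [← hxR] at this
            omega
          refine ⟨r, uL, ?_⟩
          rw [← hc, hxR]
          exact hds
        · exfalso
          have := hneu x hxL hxR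
          omega
  -- ===== uniqueness of the crossing at a fixed edge =====
  have hxedge_unique : ∀ (r r' j : ℕ) (v v' : Fin (N+1)),
      S12.DSw M σ0 φ r j v x → S12.DSw M σ0 φ r' j v' x → r = r' ∧ v = v' := by
    intro r r' j v v' d d'
    have hrr : r = r' := by
      rcases lt_trichotomy r r' with hc | hc | hc
      · exfalso
        have := hxmono (r+1) r' (by omega)
        have := d.pvB
        have := d'.pvA
        omega
      · exact hc
      · exfalso
        have := hxmono (r'+1) r (by omega)
        have := d'.pvB
        have := d.pvA
        omega
    subst hrr
    refine ⟨rfl, S12.P_inj hσ0.1 (φ := φ) (t := r) ?_⟩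
    rw [d.puA, d'.puA]
  -- ===== counterparts at lower edges stay strictly left =====
  have hv_lt : ∀ (r r' j j' : ℕ) (v v' : Fin (N+1)),
      S12.DSw M σ0 φ r j v x → S12.DSw M σ0 φ r' j' v' x → j < j' →
      ∀ t, S12.P σ0 φ t v < S12.P σ0 φ t v' := by
    intro r r' j j' v v' d d' hjj
    have hvv : v ≠ v' := by
      intro hh
      have d2 : S12.DSw M σ0 φ r' j' v x := by rw [hh]; exact d'
      have := (S12.dsw_unique hGd d d2).2
      omega
    have hvx : v ≠ x := d.ne
    have hr'r : r' < r := by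
      by_contra hc
      push_neg at hc
      have := hxmono r r' hc
      have := d.pvA
      have := d'.pvA
      omega
    have h1 : S12.P σ0 φ r' v < S12.P σ0 φ r' x := by
      rcases lt_trichotomy (S12.P σ0 φ r' v) (S12.P σ0 φ r' x) with hc | hc | hc
      · exact hc
      · exact absurd (S12.P_inj hσ0.1 hc) hvx
      · exfalso
        obtain ⟨rr, cc, _, _, dd⟩ := S12.cross hGd (Ne.symm hvx) (le_of_lt hr'r) hc
          (by rw [d.puA, d.pvA]; omega)
        have := dd.up
        have := hxmono rr (rr+1) (by omega)
        omega
    have h2 : S12.P σ0 φ r' v < S12.P σ0 φ r' v' := by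
      have e1 := d'.puA
      have e2 := d'.pvA
      have hne2 : S12.P σ0 φ r' v ≠ j' := by
        intro hh
        refine hvv (S12.P_inj hσ0.1 (φ := φ) (t := r') ?_)
        rw [hh, e1]
      omega
    intro t
    rcases lt_trichotomy (S12.P σ0 φ t v) (S12.P σ0 φ t v') with hc | hc | hc
    · exact hc
    · exact absurd (S12.P_inj hσ0.1 hc) hvv
    · exfalso
      rcases le_or_gt t r' with htr | htr
      · obtain ⟨rr, cc, _, _, dd⟩ := S12.cross hGd (Ne.symm hvv) htr hc h2
        refine S12.no_opposite hGd (s := rr) ?_ d.up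
        have := dd.down
        omega
      · obtain ⟨rr, cc, _, _, dd⟩ := S12.cross hGd hvv (le_of_lt htr) h2 hc
        refine S12.no_opposite hGd (s := rr) ?_ d'.up
        have := dd.down
        omega
  -- ===== every counterpart crosses y, before step k, at an edge ≥ e+1 =====
  have hv_cross_y : ∀ (r j : ℕ) (v : Fin (N+1)),
      S12.DSw M σ0 φ r j v x → I.val + 1 ≤ j → j ≤ j0 →
      ∃ q μ, S12.DSw M σ0 φ q μ v y ∧ q + 1 ≤ k ∧ e + 1 ≤ μ := by
    intro r j v d hj1 hj2
    have hvz : v ≠ z := by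
      intro hh
      have d2 : S12.DSw M σ0 φ r j z x := by rw [← hh]; exact d
      have := (S12.dsw_unique hGd d2 hDzx).2
      omega
    have hvnond : ∀ a b, a ≤ b → S12.P σ0 φ a v ≤ S12.P σ0 φ b v :=
      fun a b hab => S12.nondecr hGd d.up hab
    have hPTv : I.val + 2 ≤ S12.P σ0 φ φ.length v := by
      have := hvnond (r+1) φ.length (by have := d.ht; omega)
      have := d.puB
      omega
    have hzv : ∀ t, S12.P σ0 φ t z < S12.P σ0 φ t v := by
      intro t
      rcases lt_trichotomy (S12.P σ0 φ t z) (S12.P σ0 φ t v) with hc | hc | hc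
      · exact hc
      · exact absurd (S12.P_inj hσ0.1 hc).symm hvz
      · exfalso
        rcases le_or_gt t φ.length with htT | htT
        · obtain ⟨rr, cc, _, _, dd⟩ := S12.cross hGd hvz htT hc (by omega)
          refine S12.no_opposite hGd (s := rr) ?_ hDzx.up
          have := dd.down
          omega
        · have e1 : S12.P σ0 φ t v = S12.P σ0 φ φ.length v := S12.P_stable (by omega) v
          have e2 : S12.P σ0 φ t z = S12.P σ0 φ φ.length z := S12.P_stable (by omega) z
          omega
    have hP0v : S12.P σ0 φ 0 v < S12.P σ0 φ 0 y := by
      rcases eq_or_lt_of_le hj2 with heqj | hltj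
      · have hvw : v = w := by
          have d2 : S12.DSw M σ0 φ r j0 v x := by rw [← heqj]; exact d
          exact (hxedge_unique r r0 j0 v w d2 hDwx).2
        rw [hvw, hP0y]
        have := hwmono 0 k'' (by omega)
        have := hDwy.puA
        omega
      · have := hv_lt r r0 j j0 v w d hDwx hltj 0
        have := hwmono 0 k'' (by omega)
        have := hDwy.puA
        rw [hP0y]
        omega
    have hPTyv : S12.P σ0 φ φ.length y < S12.P σ0 φ φ.length v := by
      have := hymono (k+1) φ.length (by omega)
      have := hDzy.pvB
      omega
    have hvy : v ≠ y := by
      intro hh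
      rw [hh] at hPTyv
      omega
    obtain ⟨q, μ, _, hqT, dvy⟩ := S12.cross hGd hvy (Nat.zero_le φ.length) hP0v hPTyv
    have hqk : q < k := by
      have hqkne : q ≠ k := by
        intro hh
        rw [hh] at dvy
        have e1 := dvy.pvA
        have e2 := hDzy.pvA
        have e3 := dvy.puA
        have e4 := hDzy.puA
        exact hvz (S12.P_inj hσ0.1 (φ := φ) (t := k) (by omega))
      by_contra hc
      push_neg at hc
      have hky2 : S12.P σ0 φ q y ≤ e := by
        have := hymono (k+1) q (by omega)
        have := hDzy.pvB
        omega
      have := dvy.pvA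
      have := dvy.puA
      have := hzv q
      have := hzmono k q (by omega)
      have := hDzy.puA
      omega
    refine ⟨q, μ, dvy, by omega, ?_⟩
    have := hymono (q+1) k (by omega)
    have := dvy.pvB
    have := hDzy.pvA
    omega
  -- ===== induction on j : the y-crossing edge grows with j =====
  have hS : ∀ j (hj : I.val + 1 ≤ j), j ≤ j0 →
      ∃ r v q μ, S12.DSw M σ0 φ r j v x ∧ S12.DSw M σ0 φ q μ v y ∧
        e + (j - I.val) ≤ μ := by
    intro j hj
    induction j, hj using Nat.le_induction with
    | base =>
      intro hle
      obtain ⟨r, v, d⟩ := hxcross (I.val+1) (by omega) hle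
      obtain ⟨q, μ, dvy, _, hμ⟩ := hv_cross_y r (I.val+1) v d le_rfl hle
      exact ⟨r, v, q, μ, d, dvy, by omega⟩
    | succ j hj ih =>
      intro hle
      obtain ⟨r, v, q, μ, d, dvy, hμ⟩ := ih (by omega)
      obtain ⟨r', v', d'⟩ := hxcross (j+1) (by omega) hle
      obtain ⟨q', μ', dvy', hq'k, hμ'⟩ := hv_cross_y r' (j+1) v' d' (by omega) hle
      have hvv' : ∀ t, S12.P σ0 φ t v < S12.P σ0 φ t v' :=
        hv_lt r r' j (j+1) v v' d d' (by omega)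
      have hq'q : q' < q := by
        have hne : q' ≠ q := by
          intro hh
          rw [hh] at dvy'
          have e1 := dvy.pvA
          have e2 := dvy'.pvA
          have e3 := dvy.puA
          have e4 := dvy'.puA
          have := hvv' q
          omega
        by_contra hc
        push_neg at hc
        have := hymono (q+1) q' (by omega)
        have := dvy.pvB
        have := dvy'.pvA
        have := S12.nondecr hGd dvy.up (show q+1 ≤ q' by omega)
        have := dvy.puB
        have := dvy'.puA
        have := hvv' q'
        omega
      have hμμ : μ + 1 ≤ μ' := by
        have := hymono (q'+1) q (by omega)
        have := dvy'.pvB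
        have := dvy.pvA
        omega
      exact ⟨r', v', q', μ', d', dvy', by omega⟩
  obtain ⟨r, v, q, μ, d, dvy, hμ⟩ := hS j0 hj0I le_rfl
  have hvw : v = w := (hxedge_unique r r0 j0 v w d hDwx).2
  have hμm : μ = c2 := by
    have dvy2 : S12.DSw M σ0 φ q μ w y := by rw [← hvw]; exact dvy
    exact (S12.dsw_unique hGd dvy2 hDwy).2
  rw [hμm] at hμ
  -- ===== conclusion =====
  refine ⟨j0 - I.val + 1, by omega, by omega, ?_⟩
  have hidx : I.val + (j0 - I.val + 1) - 1 = j0 := by omega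
  refine Or.inr ⟨by omega, ?_, ?_⟩
  · rw [hidx]
    obtain ⟨τc, hτcmem, hτcex, hτced⟩ := hDwx.mem
    refine ⟨φ, hv, hIx, τc, hτcmem, ?_, hτced⟩
    rcases hτcex with ⟨e1, e2⟩ | ⟨e1, e2⟩
    · exact Or.inr ⟨e1, e2⟩
    · exact Or.inl ⟨e1, e2⟩
  · rw [hidx]
    rintro j' ⟨ψ, hψv, hψI, τ', hτ'mem, hex', hedge'⟩
    have hGψ : S12.Good M σ0 ψ := ⟨hG, hσ0.1, hψv⟩
    obtain ⟨r', dψ⟩ := S12.seq_cross hGψ hx hψI hIN hτ'mem hex' hedge'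
    rcases lt_trichotomy j' j0 with hc | hc | hc
    · exact (S12.two_seq hGψ hGd hx hψI hIx hIN dψ hDwx hc).elim
    · exact hc
    · exact (S12.two_seq hGd hGψ hx hIx hψI hIN hDwx dψ hc).elim
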